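/- Fix m ≥ 1 and a row vector β ∈ ℂ^m, and let a ∈ GL_{m+1}(ℂ) be the block matrix a = [[1, β],[0, 1_m]]. If g ∈ GL_{m+1}(ℂ) satisfies a^k · g · a^{−k} → 1 as k → +∞, then g = 1. -/

import Mathlib

open Matrix Filter

lemma unip_pow_block (m : ℕ) (γ : Matrix (Fin 1) (Fin m) ℂ) (k : ℕ) :
    (Matrix.fromBlocks 1 γ 0 1 : Matrix (Fin 1 ⊕ Fin m) (Fin 1 ⊕ Fin m) ℂ) ^ k
      = Matrix.fromBlocks 1 ((k : ℂ) • γ) 0 1 := by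
  induction k with
  | zero => simp [Matrix.fromBlocks_one]
  | succ k ih =>
      rw [pow_succ, ih, Matrix.fromBlocks_multiply]
      push_cast
      congr 1 <;> simp [add_smul, add_comm]

/-- If `a = [[1, β],[0, 1]]` is a unipotent block upper-triangular element of
`GL_{m+1}(ℂ)` and `a^k g a^{-k} → 1`, then `g = 1`. -/
theorem unipotent_conjugation_contracts_only_identity
    (m : ℕ) (β : Matrix (Fin 1) (Fin m) ℂ)
    (a g : (Matrix (Fin 1 ⊕ Fin m) (Fin 1 ⊕ Fin m) ℂ)ˣ)
    (ha : (a : Matrix (Fin 1 ⊕ Fin m) (Fin 1 ⊕ Fin m) ℂ) = Matrix.fromBlocks 1 β 0 1)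
    (hconv : Tendsto
      (fun k : ℕ => ((a ^ k * g * a⁻¹ ^ k : (Matrix (Fin 1 ⊕ Fin m) (Fin 1 ⊕ Fin m) ℂ)ˣ) :
        Matrix (Fin 1 ⊕ Fin m) (Fin 1 ⊕ Fin m) ℂ))
      atTop (nhds 1)) :
    g = 1 := by
  set G : Matrix (Fin 1 ⊕ Fin m) (Fin 1 ⊕ Fin m) ℂ := (g : Matrix (Fin 1 ⊕ Fin m) (Fin 1 ⊕ Fin m) ℂ) with hGdef
  set A := G.toBlocks₁₁; set B := G.toBlocks₁₂; set C := G.toBlocks₂₁; set D := G.toBlocks₂₂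
  have hG : G = Matrix.fromBlocks A B C D := (Matrix.fromBlocks_toBlocks G).symm
  have hainv : ((a⁻¹ : _ˣ) : Matrix (Fin 1 ⊕ Fin m) (Fin 1 ⊕ Fin m) ℂ)
      = Matrix.fromBlocks 1 (-β) 0 1 := by
    rw [Matrix.coe_units_inv]
    apply Matrix.inv_eq_right_inv
    rw [ha, Matrix.fromBlocks_multiply]
    simp [Matrix.fromBlocks_one]
  -- block form of the conjugate
  have hM : ∀ k : ℕ, ((a ^ k * g * a⁻¹ ^ k : _ˣ) : Matrix (Fin 1 ⊕ Fin m) (Fin 1 ⊕ Fin m) ℂ)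
      = Matrix.fromBlocks (A + (k : ℂ) • (β * C))
          ((A + (k : ℂ) • (β * C)) * (-((k : ℂ) • β)) + (B + (k : ℂ) • (β * D)))
          C (C * (-((k : ℂ) • β)) + D) := by
    intro k
    have : ((a ^ k * g * a⁻¹ ^ k : _ˣ) : Matrix (Fin 1 ⊕ Fin m) (Fin 1 ⊕ Fin m) ℂ)
        = ((a : Matrix _ _ ℂ) ^ k) * G * (((a⁻¹ : _ˣ) : Matrix _ _ ℂ) ^ k) := by
      rw [Units.val_mul, Units.val_mul, Units.val_pow_eq_pow_val, Units.val_pow_eq_pow_val]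
    rw [this, ha, hainv, unip_pow_block, unip_pow_block, hG,
      Matrix.fromBlocks_multiply, Matrix.fromBlocks_multiply]
    simp [Matrix.smul_mul, smul_neg]
  -- entrywise convergence
  have hent : ∀ i j, Tendsto
      (fun k : ℕ => ((a ^ k * g * a⁻¹ ^ k : _ˣ) : Matrix (Fin 1 ⊕ Fin m) (Fin 1 ⊕ Fin m) ℂ) i j)
      atTop (nhds ((1 : Matrix (Fin 1 ⊕ Fin m) (Fin 1 ⊕ Fin m) ℂ) i j)) := by
    intro i j
    exact (((continuous_apply j).comp (continuous_apply i)).tendsto _).comp hconv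
  -- C = 0
  have hC : C = 0 := by
    ext i j
    have h := hent (Sum.inr i) (Sum.inl j)
    have heq : (fun k : ℕ => ((a ^ k * g * a⁻¹ ^ k : _ˣ) :
        Matrix (Fin 1 ⊕ Fin m) (Fin 1 ⊕ Fin m) ℂ) (Sum.inr i) (Sum.inl j))
        = fun _ => C i j := by
      funext k; rw [hM k]; simp
    rw [heq] at h
    have := tendsto_nhds_unique tendsto_const_nhds h
    simpa [Matrix.one_apply] using this
  -- A = 1
  have hA : A = 1 := by
    ext i j
    have h := hent (Sum.inl i) (Sum.inl j)
    have heq : (fun k : ℕ => ((a ^ k * g * a⁻¹ ^ k : _ˣ) :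
        Matrix (Fin 1 ⊕ Fin m) (Fin 1 ⊕ Fin m) ℂ) (Sum.inl i) (Sum.inl j))
        = fun _ => A i j := by
      funext k; rw [hM k]; simp [hC]
    rw [heq] at h
    have := tendsto_nhds_unique tendsto_const_nhds h
    simpa [Matrix.one_apply] using this
  -- D = 1
  have hD : D = 1 := by
    ext i j
    have h := hent (Sum.inr i) (Sum.inr j)
    have heq : (fun k : ℕ => ((a ^ k * g * a⁻¹ ^ k : _ˣ) :
        Matrix (Fin 1 ⊕ Fin m) (Fin 1 ⊕ Fin m) ℂ) (Sum.inr i) (Sum.inr j))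
        = fun _ => D i j := by
      funext k; rw [hM k]; simp [hC]
    rw [heq] at h
    have := tendsto_nhds_unique tendsto_const_nhds h
    simpa [Matrix.one_apply] using this
  -- B = 0
  have hB : B = 0 := by
    ext i j
    have h := hent (Sum.inl i) (Sum.inr j)
    have heq : (fun k : ℕ => ((a ^ k * g * a⁻¹ ^ k : _ˣ) :
        Matrix (Fin 1 ⊕ Fin m) (Fin 1 ⊕ Fin m) ℂ) (Sum.inl i) (Sum.inr j))
        = fun _ => B i j := by
      funext k; rw [hM k]; simp [hC, hA, hD]
    rw [heq] at h
    have := tendsto_nhds_unique tendsto_const_nhds h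
    simpa [Matrix.one_apply] using this
  apply Units.ext
  show G = 1
  rw [hG, hA, hB, hC, hD, Matrix.fromBlocks_one]
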